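/- arXiv:2010.09886 — 2 statements merged into one kernel-verified Lean document; each statement's English description precedes it below -/
import Mathlib

section
/- Let X ∼ Bin(n, p) with 0 < p ≤ 1/2, and let 0 < ε ≤ 1/2 satisfy ε²pn ≥ 3. Then P(X ≤ (1−ε)pn) ≥ exp(−9ε²pn) and P(X ≥ (1+ε)pn) ≥ exp(−9ε²pn). -/
open Real


lemma stirling_lb (n : ℕ) : Real.sqrt π ≤ Stirling.stirlingSeq (n+1) :=
  Stirling.stirlingSeq'_antitone.le_of_tendsto
    (Stirling.tendsto_stirlingSeq_sqrt_pi.comp (Filter.tendsto_add_atTop_nat 1)) n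

lemma stirling_ub (n : ℕ) : Stirling.stirlingSeq (n+1) ≤ Real.exp 1 / Real.sqrt 2 := by
  have := Stirling.stirlingSeq'_antitone (Nat.zero_le n)
  simpa using this

lemma fact_lb (n : ℕ) (hn : 1 ≤ n) :
    Real.sqrt π * (Real.sqrt (2*n) * ((n:ℝ)/Real.exp 1)^n) ≤ (Nat.factorial n : ℝ) := by
  obtain ⟨m, rfl⟩ : ∃ m, n = m + 1 := ⟨n - 1, (Nat.succ_pred_eq_of_pos hn).symm⟩
  have h := stirling_lb m
  rw [Stirling.stirlingSeq, le_div_iff₀ (by positivity)] at h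
  push_cast at h ⊢
  linarith

lemma fact_ub (n : ℕ) (hn : 1 ≤ n) :
    (Nat.factorial n : ℝ) ≤ (Real.exp 1 / Real.sqrt 2) * (Real.sqrt (2*n) * ((n:ℝ)/Real.exp 1)^n) := by
  obtain ⟨m, rfl⟩ : ∃ m, n = m + 1 := ⟨n - 1, (Nat.succ_pred_eq_of_pos hn).symm⟩
  have h := stirling_ub m
  rw [Stirling.stirlingSeq, div_le_iff₀ (by positivity)] at h
  push_cast at h ⊢
  linarith

set_option maxHeartbeats 1600000 in
lemma choose_lb (k j : ℕ) (hk : 1 ≤ k) (hj : 1 ≤ j) :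
    1/3 * (1 / Real.sqrt k) * (((k:ℝ)+j)^(k+j) / ((k:ℝ)^k * (j:ℝ)^j)) ≤ ((k+j).choose k : ℝ) := by
  have hK : (1:ℝ) ≤ (k:ℝ) := by exact_mod_cast hk
  have hJ : (1:ℝ) ≤ (j:ℝ) := by exact_mod_cast hj
  have hcast : ((k+j).choose k : ℝ) = (Nat.factorial (k+j) : ℝ) /
      ((Nat.factorial k : ℝ) * (Nat.factorial j : ℝ)) := by
    rw [Nat.cast_choose ℝ (Nat.le_add_right k j), Nat.add_sub_cancel_left]
  rw [hcast]
  have h1 := fact_lb (k+j) (by omega)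
  have h2 := fact_ub k hk
  have h3 := fact_ub j hj
  have hE : (0:ℝ) < Real.exp 1 / Real.sqrt 2 := by positivity
  have step1 : Real.sqrt π * (Real.sqrt (2*(k+j:ℕ)) * (((k+j:ℕ):ℝ)/Real.exp 1)^(k+j)) /
      ((Real.exp 1 / Real.sqrt 2) * (Real.sqrt (2*k) * ((k:ℝ)/Real.exp 1)^k) *
       ((Real.exp 1 / Real.sqrt 2) * (Real.sqrt (2*j) * ((j:ℝ)/Real.exp 1)^j))) ≤
      (Nat.factorial (k+j) : ℝ) / ((Nat.factorial k : ℝ) * (Nat.factorial j : ℝ)) := by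
    gcongr
  refine le_trans ?_ step1
  push_cast
  -- now pure real inequality
  have hsN : Real.sqrt (2*((k:ℝ)+j)) = Real.sqrt 2 * Real.sqrt ((k:ℝ)+j) :=
    Real.sqrt_mul (by norm_num) _
  have hsK : Real.sqrt (2*(k:ℝ)) = Real.sqrt 2 * Real.sqrt (k:ℝ) :=
    Real.sqrt_mul (by norm_num) _
  have hsJ : Real.sqrt (2*(j:ℝ)) = Real.sqrt 2 * Real.sqrt (j:ℝ) :=
    Real.sqrt_mul (by norm_num) _
  rw [hsN, hsK, hsJ]
  have e0 : (0:ℝ) < Real.exp 1 := Real.exp_pos 1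
  have s2 : (0:ℝ) < Real.sqrt 2 := by positivity
  have sK1 : (1:ℝ) ≤ Real.sqrt (k:ℝ) := by
    rw [show (1:ℝ) = Real.sqrt 1 by simp]; exact Real.sqrt_le_sqrt hK
  have sJ1 : (1:ℝ) ≤ Real.sqrt (j:ℝ) := by
    rw [show (1:ℝ) = Real.sqrt 1 by simp]; exact Real.sqrt_le_sqrt hJ
  have sJN : Real.sqrt (j:ℝ) ≤ Real.sqrt ((k:ℝ)+j) := Real.sqrt_le_sqrt (by linarith)
  -- identity separating constant and power parts
  have hid : Real.sqrt π * (Real.sqrt 2 * Real.sqrt ((k:ℝ)+j) * (((k:ℝ)+j)/Real.exp 1)^(k+j)) /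
      ((Real.exp 1 / Real.sqrt 2) * (Real.sqrt 2 * Real.sqrt (k:ℝ) * ((k:ℝ)/Real.exp 1)^k) *
       ((Real.exp 1 / Real.sqrt 2) * (Real.sqrt 2 * Real.sqrt (j:ℝ) * ((j:ℝ)/Real.exp 1)^j))) =
      (Real.sqrt π * Real.sqrt 2 * Real.sqrt ((k:ℝ)+j) /
        (Real.exp 1 ^ 2 * Real.sqrt (k:ℝ) * Real.sqrt (j:ℝ))) *
      (((k:ℝ)+j)^(k+j) / ((k:ℝ)^k * (j:ℝ)^j)) := by
    have h2' : Real.sqrt 2 ^ 2 = 2 := Real.sq_sqrt (by norm_num)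
    rw [div_pow, div_pow, div_pow, pow_add (Real.exp 1)]
    have he2 : Real.exp 2 = Real.exp 1 ^ 2 := by
      rw [show (2:ℝ)=1+1 by norm_num, Real.exp_add]; ring
    field_simp
  rw [hid]
  have hP : (0:ℝ) < ((k:ℝ)+j)^(k+j) / ((k:ℝ)^k * (j:ℝ)^j) := by positivity
  refine mul_le_mul_of_nonneg_right ?_ hP.le
  have key : Real.exp 1 ^ 2 ≤ 3 * (Real.sqrt 2 * Real.sqrt π) := by
    have h1 : (Real.sqrt 2 * Real.sqrt π)^2 = 2*π := by
      rw [mul_pow, Real.sq_sqrt (by norm_num : (0:ℝ) ≤ 2), Real.sq_sqrt Real.pi_pos.le]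
    have h2π : (2.5:ℝ) ≤ Real.sqrt 2 * Real.sqrt π := by
      nlinarith [Real.pi_gt_d6, mul_nonneg (Real.sqrt_nonneg 2) (Real.sqrt_nonneg π)]
    nlinarith [Real.exp_one_lt_d9, Real.exp_pos 1]
  have sK0 : (0:ℝ) < Real.sqrt (k:ℝ) := by linarith
  have sJ0 : (0:ℝ) < Real.sqrt (j:ℝ) := by linarith
  have sN0 : (0:ℝ) < Real.sqrt ((k:ℝ)+j) := by linarith
  have lhs_eq : (1:ℝ)/3 * (1/Real.sqrt (k:ℝ)) = 1/(3*Real.sqrt (k:ℝ)) := by ring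
  rw [lhs_eq, div_le_div_iff₀ (by positivity) (by positivity)]
  have t2 : 3*(Real.sqrt 2*Real.sqrt π)*Real.sqrt (k:ℝ)*Real.sqrt (j:ℝ) ≤
      3*(Real.sqrt 2*Real.sqrt π)*Real.sqrt (k:ℝ)*Real.sqrt ((k:ℝ)+j) := by
    have : (0:ℝ) ≤ 3*(Real.sqrt 2*Real.sqrt π)*Real.sqrt (k:ℝ) := by positivity
    exact mul_le_mul_of_nonneg_left sJN this
  have t1 : Real.exp 1^2 * Real.sqrt (k:ℝ) * Real.sqrt (j:ℝ) ≤
      3*(Real.sqrt 2*Real.sqrt π)*Real.sqrt (k:ℝ)*Real.sqrt (j:ℝ) :=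
    mul_le_mul_of_nonneg_right (mul_le_mul_of_nonneg_right key sK0.le) sJ0.le
  ring_nf at t1 t2 ⊢
  linarith [t1, t2]


lemma kl_lb (k j : ℕ) (p : ℝ) (hp : 0 < p) (hp1 : p < 1) (hk : 1 ≤ k) (hj : 1 ≤ j) :
    Real.exp (-(((k:ℝ) - ((k:ℝ)+j)*p)^2 / (((k:ℝ)+j)*p*(1-p)))) ≤
      (((k:ℝ)+j)*p/k)^k * ((((k:ℝ)+j)*(1-p))/j)^j := by
  have hK : (1:ℝ) ≤ (k:ℝ) := by exact_mod_cast hk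
  have hJ : (1:ℝ) ≤ (j:ℝ) := by exact_mod_cast hj
  have hK0 : (0:ℝ) < (k:ℝ) := by linarith
  have hJ0 : (0:ℝ) < (j:ℝ) := by linarith
  have h1p : (0:ℝ) < 1 - p := by linarith
  have hN : (0:ℝ) < (k:ℝ)+j := by linarith
  have hx : (0:ℝ) < ((k:ℝ)+j)*p/k := by positivity
  have hy : (0:ℝ) < ((k:ℝ)+j)*(1-p)/j := by positivity
  have l1 : 1 - (k:ℝ)/(((k:ℝ)+j)*p) ≤ Real.log (((k:ℝ)+j)*p/k) := by
    have h := Real.log_le_sub_one_of_pos (show (0:ℝ) < (k:ℝ)/(((k:ℝ)+j)*p) by positivity)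
    rw [show (k:ℝ)/(((k:ℝ)+j)*p) = (((k:ℝ)+j)*p/k)⁻¹ by rw [inv_div], Real.log_inv] at h
    rw [inv_div] at h
    linarith
  have l2 : 1 - (j:ℝ)/(((k:ℝ)+j)*(1-p)) ≤ Real.log (((k:ℝ)+j)*(1-p)/j) := by
    have h := Real.log_le_sub_one_of_pos (show (0:ℝ) < (j:ℝ)/(((k:ℝ)+j)*(1-p)) by positivity)
    rw [show (j:ℝ)/(((k:ℝ)+j)*(1-p)) = (((k:ℝ)+j)*(1-p)/j)⁻¹ by rw [inv_div], Real.log_inv] at h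
    rw [inv_div] at h
    linarith
  have sum_id : (k:ℝ)*(1 - (k:ℝ)/(((k:ℝ)+j)*p)) + (j:ℝ)*(1 - (j:ℝ)/(((k:ℝ)+j)*(1-p)))
      = -(((k:ℝ) - ((k:ℝ)+j)*p)^2 / (((k:ℝ)+j)*p*(1-p))) := by
    field_simp
    ring
  have t1 : (k:ℝ)*(1 - (k:ℝ)/(((k:ℝ)+j)*p)) ≤ (k:ℝ)*Real.log (((k:ℝ)+j)*p/k) :=
    mul_le_mul_of_nonneg_left l1 hK0.le
  have t2 : (j:ℝ)*(1 - (j:ℝ)/(((k:ℝ)+j)*(1-p))) ≤ (j:ℝ)*Real.log (((k:ℝ)+j)*(1-p)/j) :=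
    mul_le_mul_of_nonneg_left l2 hJ0.le
  have hxk : Real.exp ((k:ℝ) * Real.log (((k:ℝ)+j)*p/k)) = (((k:ℝ)+j)*p/k)^k := by
    rw [Real.exp_nat_mul, Real.exp_log hx]
  have hyj : Real.exp ((j:ℝ) * Real.log (((k:ℝ)+j)*(1-p)/j)) = ((((k:ℝ)+j)*(1-p))/j)^j := by
    rw [Real.exp_nat_mul, Real.exp_log hy]
  rw [← hxk, ← hyj, ← Real.exp_add]
  exact Real.exp_le_exp.mpr (by linarith)

lemma term_lb (k j : ℕ) (p : ℝ) (hp : 0 < p) (hp1 : p < 1) (hk : 1 ≤ k) (hj : 1 ≤ j)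
    (hcl : 1/3 * (1 / Real.sqrt k) * (((k:ℝ)+j)^(k+j) / ((k:ℝ)^k * (j:ℝ)^j)) ≤ ((k+j).choose k : ℝ)) :
    Real.exp (-(((k:ℝ) - ((k:ℝ)+j)*p)^2 / (((k:ℝ)+j)*p*(1-p)))) / (3*Real.sqrt k) ≤
      ((k+j).choose k : ℝ) * p^k * (1-p)^j := by
  have hK : (1:ℝ) ≤ (k:ℝ) := by exact_mod_cast hk
  have hJ : (1:ℝ) ≤ (j:ℝ) := by exact_mod_cast hj
  have h1p : (0:ℝ) < 1 - p := by linarith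
  have sk0 : (0:ℝ) < Real.sqrt k := Real.sqrt_pos.mpr (by linarith)
  have h2 := kl_lb k j p hp hp1 hk hj
  have hid : (((k:ℝ)+j)^(k+j) / ((k:ℝ)^k * (j:ℝ)^j)) * (p^k * (1-p)^j)
      = (((k:ℝ)+j)*p/k)^k * ((((k:ℝ)+j)*(1-p))/j)^j := by
    rw [div_pow, div_pow, mul_pow, mul_pow, pow_add]
    field_simp
  have pp0 : (0:ℝ) ≤ p^k * (1-p)^j := by positivity
  calc Real.exp (-(((k:ℝ) - ((k:ℝ)+j)*p)^2 / (((k:ℝ)+j)*p*(1-p)))) / (3*Real.sqrt k)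
      = 1/3 * (1/Real.sqrt k) * Real.exp (-(((k:ℝ) - ((k:ℝ)+j)*p)^2 / (((k:ℝ)+j)*p*(1-p)))) := by
        ring
    _ ≤ 1/3 * (1/Real.sqrt k) * ((((k:ℝ)+j)*p/k)^k * ((((k:ℝ)+j)*(1-p))/j)^j) := by
        apply mul_le_mul_of_nonneg_left h2 (by positivity)
    _ = (1/3 * (1/Real.sqrt k) * (((k:ℝ)+j)^(k+j) / ((k:ℝ)^k * (j:ℝ)^j))) * (p^k * (1-p)^j) := by
        rw [mul_assoc, mul_assoc, hid]
        ring
    _ ≤ ((k+j).choose k : ℝ) * (p^k * (1-p)^j) := mul_le_mul_of_nonneg_right hcl pp0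
    _ = ((k+j).choose k : ℝ) * p^k * (1-p)^j := by ring

set_option maxHeartbeats 1600000 in
lemma tail_core (n : ℕ) (p ε : ℝ) (hp : 0 < p) (hp2 : p ≤ 1/2)
    (hε : 0 < ε) (hε2 : ε ≤ 1/2) (h3 : 3 ≤ ε^2 * p * n)
    (f : ℕ → ℝ) (a b : ℕ)
    (ha : 1 ≤ a) (hbn : b + 1 ≤ n)
    (hf0 : ∀ k ∈ Finset.range (n+1), 0 ≤ f k)
    (hfge : ∀ k ∈ Finset.Icc a b, (n.choose k : ℝ) * p^k * (1-p)^(n-k) ≤ f k)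
    (hcard : ε*(p*n)/3 ≤ ((Finset.Icc a b).card : ℝ))
    (hdev : ∀ k ∈ Finset.Icc a b, ((k:ℝ) - (n:ℝ)*p)^2 ≤ (3/2*ε*((n:ℝ)*p))^2)
    (hub : ∀ k ∈ Finset.Icc a b, (k:ℝ) ≤ 2*((n:ℝ)*p)) :
    Real.exp (-(9 * ε^2 * p * n)) ≤ ∑ k ∈ Finset.range (n+1), f k := by
  have hp1 : p < 1 := by linarith
  have hμ0 : (0:ℝ) < (n:ℝ)*p := by
    have : (0:ℝ) < ε^2*p*n := by linarith
    nlinarith [sq_nonneg ε]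
  have hn0 : (0:ℝ) < (n:ℝ) := by nlinarith
  have hε4 : ε^2 ≤ 1/4 := by nlinarith
  have hμ12 : 12 ≤ (n:ℝ)*p := by nlinarith [h3, hε4, hμ0]
  have hεμ6 : 6 ≤ ε*((n:ℝ)*p) := by nlinarith [h3, hε.le]
  set s : ℝ := Real.sqrt (2*((n:ℝ)*p)) with hs_def
  have hs0 : 0 < s := Real.sqrt_pos.mpr (by linarith)
  have hs2 : s^2 = 2*((n:ℝ)*p) := Real.sq_sqrt (by linarith)
  set E : ℝ := Real.exp (-(9/2*ε^2*((n:ℝ)*p))) with hE_def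
  have hE0 : 0 < E := Real.exp_pos _
  set c : ℝ := E / (3*s) with hc_def
  have hc0 : (0:ℝ) ≤ c := by positivity
  -- per-term bound
  have hterm : ∀ k ∈ Finset.Icc a b, c ≤ (n.choose k : ℝ) * p^k * (1-p)^(n-k) := by
    intro k hk
    obtain ⟨hak, hkb⟩ := Finset.mem_Icc.mp hk
    have hk1 : 1 ≤ k := le_trans ha hak
    have hj1 : 1 ≤ n - k := by omega
    have hkj : k + (n - k) = n := by omega
    have hT := term_lb k (n-k) p hp hp1 hk1 hj1 (choose_lb k (n-k) hk1 hj1)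
    rw [hkj] at hT
    have hNc : (k:ℝ) + ((n-k : ℕ):ℝ) = (n:ℝ) := by
      have : ((k + (n-k) : ℕ):ℝ) = ((n:ℕ):ℝ) := by rw [hkj]
      push_cast at this
      linarith
    rw [hNc] at hT
    refine le_trans ?_ hT
    -- c ≤ exp(-((k - n p)^2/(n p (1-p))))/(3 √k)
    have hkub := hub k hk
    have hkdev := hdev k hk
    have hsk : Real.sqrt k ≤ s := Real.sqrt_le_sqrt (by linarith)
    have hsk0 : 0 < Real.sqrt (k:ℝ) := Real.sqrt_pos.mpr (by exact_mod_cast Nat.pos_of_ne_zero (by omega))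
    have hexp_le : ((k:ℝ) - (n:ℝ)*p)^2 / ((n:ℝ)*p*(1-p)) ≤ 9/2*ε^2*((n:ℝ)*p) := by
      have hden : (n:ℝ)*p/2 ≤ (n:ℝ)*p*(1-p) := by nlinarith
      have hpos : (0:ℝ) < (n:ℝ)*p/2 := by linarith
      calc ((k:ℝ) - (n:ℝ)*p)^2 / ((n:ℝ)*p*(1-p))
          ≤ (3/2*ε*((n:ℝ)*p))^2 / ((n:ℝ)*p/2) := by
            apply div_le_div₀ (by positivity) hkdev hpos hden
        _ = 9/2*ε^2*((n:ℝ)*p) := by field_simp; ring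
    rw [hc_def, hE_def]
    apply div_le_div₀ (Real.exp_pos _).le (Real.exp_le_exp.mpr (by linarith)) (by positivity)
      (by linarith [hsk])
  have hsub : Finset.Icc a b ⊆ Finset.range (n+1) := by
    intro k hk
    rw [Finset.mem_range]
    have := (Finset.mem_Icc.mp hk).2
    omega
  have hsum : ((Finset.Icc a b).card : ℝ) * c ≤ ∑ k ∈ Finset.range (n+1), f k := by
    calc ((Finset.Icc a b).card : ℝ) * c ≤ ∑ k ∈ Finset.Icc a b, f k := by
          rw [← nsmul_eq_mul]
          apply Finset.card_nsmul_le_sum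
          intro k hk
          exact le_trans (hterm k hk) (hfge k hk)
      _ ≤ ∑ k ∈ Finset.range (n+1), f k :=
          Finset.sum_le_sum_of_subset_of_nonneg hsub (fun k hk _ => hf0 k hk)
  refine le_trans ?_ hsum
  -- numeric part : exp(-9 ε^2 p n) ≤ card * c
  have hE16 : E ≤ 1/16 := by
    have h1 : E ≤ Real.exp (-3) := by
      apply Real.exp_le_exp.mpr
      nlinarith [h3]
    have e3 : Real.exp 3 = (Real.exp 1)^3 := by
      rw [show (3:ℝ) = (3:ℕ)*(1:ℝ) by norm_num, Real.exp_nat_mul]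
    have h16 : (16:ℝ) ≤ Real.exp 3 := by
      rw [e3]
      have h2 : (2.7:ℝ) ≤ Real.exp 1 := by nlinarith [Real.exp_one_gt_d9]
      have h3' := pow_le_pow_left₀ (by norm_num : (0:ℝ) ≤ 2.7) h2 3
      norm_num at h3'
      linarith
    have h2 : Real.exp (-3) ≤ 1/16 := by
      rw [Real.exp_neg]
      calc (Real.exp 3)⁻¹ ≤ 16⁻¹ := inv_anti₀ (by norm_num) h16
        _ = 1/16 := by norm_num
    linarith
  have key : 2 ≤ ε*s := by
    nlinarith [hs2, h3, hs0.le, mul_nonneg hε.le hs0.le, sq_nonneg (ε*s - 2)]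
  have hfin : E ≤ ε*((n:ℝ)*p)/(9*s) := by
    rw [le_div_iff₀ (by positivity)]
    nlinarith [mul_le_mul_of_nonneg_right hE16 (by positivity : (0:ℝ) ≤ 9*s),
      mul_nonneg (by nlinarith [key] : (0:ℝ) ≤ ε*s - 2) hs0.le, hs2]
  calc Real.exp (-(9 * ε^2 * p * n))
      = E * E := by
        rw [hE_def, ← Real.exp_add]
        congr 1
        ring
    _ ≤ (ε*((n:ℝ)*p)/(9*s)) * E := mul_le_mul_of_nonneg_right hfin hE0.le
    _ = ε*(p*(n:ℝ))/3 * (E/(3*s)) := by ring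
    _ ≤ ((Finset.Icc a b).card : ℝ) * c := by
        rw [hc_def]
        exact mul_le_mul_of_nonneg_right hcard (by positivity)


set_option maxHeartbeats 1600000 in
theorem stmt_14 (n : ℕ) (p ε : ℝ) (hp : 0 < p) (hp2 : p ≤ 1/2)
    (hε : 0 < ε) (hε2 : ε ≤ 1/2) (h3 : 3 ≤ ε^2 * p * n) :
    Real.exp (-(9 * ε^2 * p * n)) ≤
      ∑ k ∈ Finset.range (n+1),
        (if (k:ℝ) ≤ (1 - ε) * p * n then (n.choose k : ℝ) * p^k * (1-p)^(n-k) else 0)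
    ∧ Real.exp (-(9 * ε^2 * p * n)) ≤
      ∑ k ∈ Finset.range (n+1),
        (if (1 + ε) * p * n ≤ (k:ℝ) then (n.choose k : ℝ) * p^k * (1-p)^(n-k) else 0) := by
  have hp1 : p < 1 := by linarith
  have h1p : (0:ℝ) ≤ 1 - p := by linarith
  have hμ0 : (0:ℝ) < p*(n:ℝ) := by nlinarith [sq_nonneg ε, h3]
  have hn0 : (0:ℝ) < (n:ℝ) := by nlinarith
  have hε4 : ε^2 ≤ 1/4 := by nlinarith
  have hμ12 : 12 ≤ p*(n:ℝ) := by nlinarith [h3, hε4, hμ0]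
  have hεμ6 : 6 ≤ ε*(p*(n:ℝ)) := by nlinarith [h3, hε.le]
  have hεμ0 : 0 ≤ ε*(p*(n:ℝ)) := by linarith
  constructor
  · -- lower tail
    set A : ℝ := (1-3/2*ε)*(p*(n:ℝ)) with hA_def
    set B : ℝ := (1-ε)*(p*(n:ℝ)) with hB_def
    have hA0 : (0:ℝ) ≤ A := by nlinarith
    have hB0 : (0:ℝ) ≤ B := by nlinarith
    have hAB : A + 2 ≤ B := by
      rw [hA_def, hB_def]; nlinarith
    set a : ℕ := ⌈A⌉₊ with ha_def
    set b : ℕ := ⌊B⌋₊ with hb_def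
    have haR : (a:ℝ) < A + 1 := Nat.ceil_lt_add_one hA0
    have haR2 : A ≤ (a:ℝ) := Nat.le_ceil A
    have hbR : B - 1 < (b:ℝ) := Nat.sub_one_lt_floor B
    have hbR2 : (b:ℝ) ≤ B := Nat.floor_le hB0
    have ha1 : 1 ≤ a := by
      rw [ha_def]
      exact Nat.one_le_iff_ne_zero.mpr (by
        intro h
        have := Nat.ceil_eq_zero.mp h
        nlinarith)
    have hbn : b + 1 ≤ n := by
      have hlt : (b:ℝ) < (n:ℝ) := by
        rw [hB_def] at hbR2
        nlinarith
      exact_mod_cast Nat.cast_lt.mp hlt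
    have hab : a ≤ b := Nat.cast_le.mp (by linarith : (a:ℝ) ≤ (b:ℝ))
    apply tail_core n p ε hp hp2 hε hε2 h3 _ a b ha1 hbn
    · intro k _
      split
      · positivity
      · exact le_rfl
    · intro k hk
      obtain ⟨h1, h2⟩ := Finset.mem_Icc.mp hk
      have h2R : (k:ℝ) ≤ (b:ℝ) := Nat.cast_le.mpr h2
      rw [if_pos (by rw [hB_def] at hbR2; nlinarith : (k:ℝ) ≤ (1 - ε) * p * n)]
    · -- card
      rw [Nat.card_Icc]
      have : ((b + 1 - a : ℕ):ℝ) = (b:ℝ) + 1 - (a:ℝ) := by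
        push_cast [Nat.cast_sub (by omega : a ≤ b + 1)]
        ring
      rw [this]
      nlinarith
    · intro k hk
      obtain ⟨h1, h2⟩ := Finset.mem_Icc.mp hk
      have h1R : (a:ℝ) ≤ (k:ℝ) := Nat.cast_le.mpr h1
      have h2R : (k:ℝ) ≤ (b:ℝ) := Nat.cast_le.mpr h2
      apply sq_le_sq'
      · rw [hA_def] at haR2; nlinarith
      · rw [hB_def] at hbR2; nlinarith
    · intro k hk
      obtain ⟨h1, h2⟩ := Finset.mem_Icc.mp hk
      have h2R : (k:ℝ) ≤ (b:ℝ) := Nat.cast_le.mpr h2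
      rw [hB_def] at hbR2
      nlinarith
  · -- upper tail
    set A : ℝ := (1+ε)*(p*(n:ℝ)) with hA_def
    set B : ℝ := (1+3/2*ε)*(p*(n:ℝ)) with hB_def
    have hA0 : (0:ℝ) ≤ A := by nlinarith
    have hB0 : (0:ℝ) ≤ B := by nlinarith
    have hAB : A + 2 ≤ B := by
      rw [hA_def, hB_def]; nlinarith
    set a : ℕ := ⌈A⌉₊ with ha_def
    set b : ℕ := ⌊B⌋₊ with hb_def
    have haR : (a:ℝ) < A + 1 := Nat.ceil_lt_add_one hA0
    have haR2 : A ≤ (a:ℝ) := Nat.le_ceil A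
    have hbR : B - 1 < (b:ℝ) := Nat.sub_one_lt_floor B
    have hbR2 : (b:ℝ) ≤ B := Nat.floor_le hB0
    have ha1 : 1 ≤ a := by
      rw [ha_def]
      exact Nat.one_le_iff_ne_zero.mpr (by
        intro h
        have := Nat.ceil_eq_zero.mp h
        nlinarith)
    have hbn : b + 1 ≤ n := by
      have hB78 : B ≤ 7/8*(n:ℝ) := by
        rw [hB_def]
        nlinarith [mul_le_mul hε2 hp2 hp.le (by norm_num : (0:ℝ) ≤ 1/2)]
      have hlt : (b:ℝ) < (n:ℝ) := by nlinarith
      exact_mod_cast Nat.cast_lt.mp hlt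
    have hab : a ≤ b := Nat.cast_le.mp (by linarith : (a:ℝ) ≤ (b:ℝ))
    apply tail_core n p ε hp hp2 hε hε2 h3 _ a b ha1 hbn
    · intro k _
      split
      · positivity
      · exact le_rfl
    · intro k hk
      obtain ⟨h1, h2⟩ := Finset.mem_Icc.mp hk
      have h1R : (a:ℝ) ≤ (k:ℝ) := Nat.cast_le.mpr h1
      rw [if_pos (by rw [hA_def] at haR2; nlinarith : (1 + ε) * p * n ≤ (k:ℝ))]
    · -- card
      rw [Nat.card_Icc]
      have : ((b + 1 - a : ℕ):ℝ) = (b:ℝ) + 1 - (a:ℝ) := by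
        push_cast [Nat.cast_sub (by omega : a ≤ b + 1)]
        ring
      rw [this]
      nlinarith
    · intro k hk
      obtain ⟨h1, h2⟩ := Finset.mem_Icc.mp hk
      have h1R : (a:ℝ) ≤ (k:ℝ) := Nat.cast_le.mpr h1
      have h2R : (k:ℝ) ≤ (b:ℝ) := Nat.cast_le.mpr h2
      apply sq_le_sq'
      · rw [hA_def] at haR2; nlinarith
      · rw [hB_def] at hbR2; nlinarith
    · intro k hk
      obtain ⟨h1, h2⟩ := Finset.mem_Icc.mp hk
      have h2R : (k:ℝ) ≤ (b:ℝ) := Nat.cast_le.mpr h2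
      rw [hB_def] at hbR2
      nlinarith
end

section
/- Let μ be the uniform distribution on a 6-point set {1,...,6} and let μ_n be the empirical measure of n i.i.d. samples from μ. Let X = n·μ_n({1}) and X' = n·μ_n({2}) (each marginally Bin(n, 1/6), jointly negatively associated). Then for n ≥ 324, P(X − X' > 2√n) ≥ e^{−243}. -/
open MeasureTheory ProbabilityTheory Real Finset

-- analytic lemmas
lemma aux_sinh_le_mul_cosh {x : ℝ} (hx : 0 ≤ x) : Real.sinh x ≤ x * Real.cosh x := by
  have hd : ∀ y : ℝ, HasDerivAt (fun y => y * Real.cosh y - Real.sinh y) (y * Real.sinh y) y := by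
    intro y
    have h1 : HasDerivAt (fun y : ℝ => y * Real.cosh y) (Real.cosh y + y * Real.sinh y) y := by
      exact ((hasDerivAt_id' y).mul (Real.hasDerivAt_cosh y)).congr_deriv (by ring)
    exact (h1.sub (Real.hasDerivAt_sinh y)).congr_deriv (by ring)
  have hm : MonotoneOn (fun y => y * Real.cosh y - Real.sinh y) (Set.Ici 0) := by
    apply monotoneOn_of_deriv_nonneg (convex_Ici 0)
    · exact (Continuous.continuousOn (by continuity))
    · intro y hy
      exact (hd y).differentiableAt.differentiableWithinAt
    · intro y hy
      rw [interior_Ici, Set.mem_Ioi] at hy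
      rw [(hd y).deriv]
      exact mul_nonneg hy.le (Real.sinh_nonneg_iff.2 hy.le)
  have := hm Set.self_mem_Ici hx hx
  simp only [Real.sinh_zero, Real.cosh_zero, mul_one, zero_mul, sub_zero, zero_sub, neg_zero] at this
  linarith

lemma aux_one_add_sq_le_cosh {x : ℝ} (hx : 0 ≤ x) : 1 + x^2/2 ≤ Real.cosh x := by
  have hd : ∀ y : ℝ, HasDerivAt (fun y => Real.cosh y - (1 + y^2/2)) (Real.sinh y - y) y := by
    intro y
    have h2 : HasDerivAt (fun y : ℝ => 1 + y^2/2) y y := by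
      have := ((hasDerivAt_pow 2 y).div_const 2).const_add 1
      simpa using this
    exact (Real.hasDerivAt_cosh y).sub h2
  have hm : MonotoneOn (fun y => Real.cosh y - (1 + y^2/2)) (Set.Ici 0) := by
    apply monotoneOn_of_deriv_nonneg (convex_Ici 0)
    · exact (Continuous.continuousOn (by continuity))
    · intro y hy
      exact (hd y).differentiableAt.differentiableWithinAt
    · intro y hy
      rw [interior_Ici, Set.mem_Ioi] at hy
      rw [(hd y).deriv]
      simpa using Real.self_le_sinh_iff.2 hy.le
  have := hm Set.self_mem_Ici hx hx
  simp only [Real.cosh_zero] at this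
  norm_num at this
  linarith

lemma aux_cosh_512 : Real.cosh (5/12) ≤ 144/119 := by
  have h1 : (7:ℝ)/12 ≤ Real.exp (-(5/12)) := by
    have := Real.add_one_le_exp (-(5/12) : ℝ); linarith
  have h2 : (17:ℝ)/12 ≤ Real.exp (5/12) := by
    have := Real.add_one_le_exp ((5/12) : ℝ); linarith
  have e1 : Real.exp (5/12) ≤ 12/7 := by
    rw [show (5/12 : ℝ) = -(-(5/12)) by ring, Real.exp_neg]
    rw [inv_le_comm₀ (Real.exp_pos _) (by norm_num)]
    linarith
  have e2 : Real.exp (-(5/12)) ≤ 12/17 := by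
    rw [Real.exp_neg, inv_le_comm₀ (Real.exp_pos _) (by norm_num)]
    linarith
  rw [Real.cosh_eq]
  linarith

lemma aux_pointwise {l : ℝ} (h0 : 0 < l) (hl : l ≤ 5/6) :
    6 * (4 + 2 * Real.cosh (2*l)) ≤ (4 + 2 * Real.cosh l)^2 * Real.exp ((107/100) * l^2) := by
  set C := Real.cosh l with hC
  have hC1 : 1 ≤ C := Real.one_le_cosh l
  -- cosh (2l) = 2 C^2 - 1
  have h2l : Real.cosh (2*l) = 2*C^2 - 1 := by
    rw [Real.cosh_two_mul, Real.cosh_sq']; ring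
  -- C - 1 ≤ (3/4) l^2
  have hch : Real.cosh (l/2) ≤ 144/119 := by
    calc Real.cosh (l/2) ≤ Real.cosh (5/12) := by
          rw [Real.cosh_le_cosh]
          rw [abs_of_nonneg (by linarith), abs_of_nonneg (by norm_num)]
          linarith
      _ ≤ 144/119 := aux_cosh_512
  have hsh : Real.sinh (l/2) ≤ (l/2) * (144/119) := by
    calc Real.sinh (l/2) ≤ (l/2) * Real.cosh (l/2) := aux_sinh_le_mul_cosh (by linarith)
      _ ≤ (l/2) * (144/119) := by nlinarith
  have hsh0 : 0 ≤ Real.sinh (l/2) := Real.sinh_nonneg_iff.2 (by linarith)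
  have hKey : C - 1 ≤ (3/4) * l^2 := by
    have hdo : C = 2 * Real.sinh (l/2)^2 + 1 := by
      rw [hC, show l = 2*(l/2) by ring, Real.cosh_two_mul, Real.cosh_sq']; ring
    nlinarith [sq_nonneg (Real.sinh (l/2))]
  -- exp lower bound
  have hE : 1 + (107/75) * (C - 1) ≤ Real.exp ((107/100) * l^2) := by
    have := Real.add_one_le_exp ((107/100) * l^2)
    nlinarith
  have hpos : (0:ℝ) < (4 + 2*C)^2 := by positivity
  have hmul : (4 + 2*C)^2 * (1 + (107/75) * (C - 1)) ≤ (4 + 2*C)^2 * Real.exp ((107/100) * l^2) := by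
    apply mul_le_mul_of_nonneg_left hE (le_of_lt hpos)
  rw [h2l]
  nlinarith [mul_nonneg (sub_nonneg.2 hC1) (sq_nonneg (C-1)), sq_nonneg (C-1)]

set_option maxHeartbeats 1000000 in
open Classical in
lemma count_main (n : ℕ) (hn : 324 ≤ n) :
    Real.exp (-243) * 6^n ≤ ((Finset.univ.filter (fun f : Fin n → Fin 6 =>
        2 * Real.sqrt n < ((Finset.univ.filter (fun i => f i = 0)).card : ℝ)
          - ((Finset.univ.filter (fun i => f i = 1)).card : ℝ))).card : ℝ) := by
  have hn324 : (324:ℝ) ≤ n := by exact_mod_cast hn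
  have hn0 : (0:ℝ) < n := by linarith
  set s : ℝ := Real.sqrt n with hs
  have hs0 : 0 < s := Real.sqrt_pos.2 hn0
  have hsq : s^2 = n := Real.sq_sqrt hn0.le
  have hs18 : 18 ≤ s := by nlinarith [Real.sqrt_nonneg (n:ℝ), hsq, hn324]
  set l : ℝ := 15 / s with hldef
  have hl0 : 0 < l := by positivity
  have hl2 : l^2 = 225 / n := by
    rw [hldef, div_pow, hsq]; norm_num
  have hl56 : l ≤ 5/6 := by
    rw [hldef, div_le_iff₀ hs0]; linarith
  -- the weight function
  set d : Fin 6 → ℝ := fun v => if v = 0 then 1 else if v = 1 then -1 else 0 with hd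
  set D : (Fin n → Fin 6) → ℝ := fun f => ∑ i, d (f i) with hD
  have hDval : ∀ f : Fin n → Fin 6, D f
      = ((Finset.univ.filter (fun i => f i = 0)).card : ℝ)
        - ((Finset.univ.filter (fun i => f i = 1)).card : ℝ) := by
    intro f
    have hv : ∀ v : Fin 6, d v = (if v = 0 then (1:ℝ) else 0) - (if v = 1 then (1:ℝ) else 0) := by
      intro v; fin_cases v <;> simp [hd]
    rw [hD]
    simp only [hv]
    rw [Finset.sum_sub_distrib, Finset.sum_boole, Finset.sum_boole]
  -- product identity
  have prodid : ∀ c : ℝ, ∑ f : Fin n → Fin 6, Real.exp (c * D f)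
      = (4 + 2 * Real.cosh c)^n := by
    intro c
    have sum6 : ∑ v : Fin 6, Real.exp (c * d v) = 4 + 2 * Real.cosh c := by
      rw [Real.cosh_eq]
      rw [Fin.sum_univ_six]
      rw [show d 0 = 1 by simp only [hd]; rw [if_pos (by decide)],
        show d 1 = -1 by simp only [hd]; rw [if_neg (by decide), if_pos (by decide)],
        show d 2 = 0 by simp only [hd]; rw [if_neg (by decide), if_neg (by decide)],
        show d 3 = 0 by simp only [hd]; rw [if_neg (by decide), if_neg (by decide)],
        show d 4 = 0 by simp only [hd]; rw [if_neg (by decide), if_neg (by decide)],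
        show d 5 = 0 by simp only [hd]; rw [if_neg (by decide), if_neg (by decide)]]
      rw [mul_one, mul_neg_one, mul_zero]
      rw [Real.exp_zero]
      ring
    rw [← sum6, Fintype.sum_pow]
    apply Finset.sum_congr rfl
    intro f _
    rw [hD, Finset.mul_sum, Real.exp_sum]
  set A : ℝ := ∑ f : Fin n → Fin 6, Real.exp (l * D f) with hA
  set B : ℝ := ∑ f : Fin n → Fin 6, Real.exp (2 * l * D f) with hB
  have hAv : A = (4 + 2 * Real.cosh l)^n := prodid l
  have hBv : B = (4 + 2 * Real.cosh (2*l))^n := prodid (2*l)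
  have hB0 : 0 < B := by
    rw [hB]
    apply Finset.sum_pos (fun f _ => Real.exp_pos _)
    exact Finset.univ_nonempty
  -- lower bound for A
  have hA_lb : 6^n * Real.exp 31 ≤ A := by
    have h1 : Real.exp ((31:ℝ)/n) ≤ 1 + l^2/6 := by
      set w : ℝ := 75 / (2*n + 75) with hw
      have hw1 : w < 1 := by rw [hw, div_lt_one (by linarith)]; linarith
      have hw0 : 0 < w := by positivity
      have hexpw : Real.exp w ≤ 1 + l^2/6 := by
        have hne : (1:ℝ) - w = (2*n) / (2*n+75) := by
          rw [hw]; field_simp; ring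
        have h1w : (0:ℝ) < 1 - w := by linarith
        have h2 : 1 - w ≤ (Real.exp w)⁻¹ := by
          have := Real.add_one_le_exp (-w)
          rw [Real.exp_neg] at this
          linarith
        have h3 : Real.exp w ≤ (1 - w)⁻¹ := (le_inv_comm₀ (Real.exp_pos _) h1w).2 h2
        calc Real.exp w ≤ (1 - w)⁻¹ := h3
          _ = (2*n+75) / (2*n) := by rw [hne]; rw [inv_div]
          _ = 1 + l^2/6 := by rw [hl2]; field_simp; ring
      have h31 : (31:ℝ)/n ≤ w := by
        rw [hw, div_le_div_iff₀ hn0 (by linarith)]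
        nlinarith
      exact le_trans (Real.exp_le_exp.2 h31) hexpw
    have h2 : Real.exp 31 ≤ (1 + l^2/6)^n := by
      have := pow_le_pow_left₀ (Real.exp_pos _).le h1 n
      rwa [← Real.exp_nat_mul, mul_div_cancel₀ _ (ne_of_gt hn0)] at this
    calc 6^n * Real.exp 31 ≤ 6^n * (1 + l^2/6)^n := by
          apply mul_le_mul_of_nonneg_left h2 (by positivity)
      _ = (6 * (1 + l^2/6))^n := by rw [mul_pow]
      _ = (6 + l^2)^n := by ring_nf
      _ ≤ (4 + 2 * Real.cosh l)^n := by
          apply pow_le_pow_left₀ (by positivity)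
          nlinarith [aux_one_add_sq_le_cosh hl0.le]
      _ = A := hAv.symm
  -- upper bound for B
  have hB_ub : 6^n * B ≤ A^2 * Real.exp (963/4) := by
    have hpt := aux_pointwise hl0 hl56
    have h1 : (6 * (4 + 2 * Real.cosh (2*l)))^n
        ≤ ((4 + 2 * Real.cosh l)^2 * Real.exp ((107/100) * l^2))^n := by
      apply pow_le_pow_left₀ (by positivity) hpt
    rw [mul_pow] at h1
    rw [mul_pow] at h1
    rw [← Real.exp_nat_mul] at h1
    have hexp : (n:ℝ) * ((107/100) * l^2) = 963/4 := by
      rw [hl2]; field_simp; ring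
    rw [hexp, ← pow_mul] at h1
    calc 6^n * B = 6^n * (4 + 2*Real.cosh (2*l))^n := by rw [hBv]
      _ ≤ ((4 + 2*Real.cosh l)^(2*n)) * Real.exp (963/4) := h1
      _ = A^2 * Real.exp (963/4) := by rw [hAv, ← pow_mul, Nat.mul_comm]
  -- split A
  set p : (Fin n → Fin 6) → Prop := fun f => 2 * Real.sqrt n < D f with hp
  set S := Finset.univ.filter p with hS
  have hsplit : ∑ f ∈ S, Real.exp (l * D f)
      + ∑ f ∈ Finset.univ.filter (fun f => ¬ p f), Real.exp (l * D f) = A :=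
    Finset.sum_filter_add_sum_filter_not _ _ _
  have hnotp : ∑ f ∈ Finset.univ.filter (fun f => ¬ p f), Real.exp (l * D f)
      ≤ 6^n * Real.exp 30 := by
    have hcard : ((Finset.univ.filter (fun f => ¬ p f)).card : ℝ) ≤ 6^n := by
      calc ((Finset.univ.filter (fun f => ¬ p f)).card : ℝ)
          ≤ (Finset.univ : Finset (Fin n → Fin 6)).card := by
            exact_mod_cast Finset.card_filter_le _ _
        _ = 6^n := by
            rw [Finset.card_univ, Fintype.card_fun]
            simp
    calc ∑ f ∈ Finset.univ.filter (fun f => ¬ p f), Real.exp (l * D f)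
        ≤ ∑ _f ∈ Finset.univ.filter (fun f => ¬ p f), Real.exp 30 := by
          apply Finset.sum_le_sum
          intro f hf
          rw [Finset.mem_filter] at hf
          apply Real.exp_le_exp.2
          have : D f ≤ 2 * s := not_lt.1 hf.2
          calc l * D f ≤ l * (2 * s) := by nlinarith
            _ = 30 := by rw [hldef]; field_simp; ring
      _ = ((Finset.univ.filter (fun f => ¬ p f)).card : ℝ) * Real.exp 30 := by
          rw [Finset.sum_const, nsmul_eq_mul]
      _ ≤ 6^n * Real.exp 30 := by
          apply mul_le_mul_of_nonneg_right hcard (Real.exp_pos _).le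
  -- Cauchy-Schwarz
  have hCS : (∑ f ∈ S, Real.exp (l * D f))^2 ≤ (S.card : ℝ) * B := by
    have h1 := Finset.sum_mul_sq_le_sq_mul_sq S (fun _ => (1:ℝ)) (fun f => Real.exp (l * D f))
    simp only [one_mul, one_pow] at h1
    have h2 : ∑ f ∈ S, (Real.exp (l * D f))^2 ≤ B := by
      have heq : ∀ f : Fin n → Fin 6, (Real.exp (l * D f))^2 = Real.exp (2 * l * D f) := by
        intro f; rw [← Real.exp_nat_mul]; ring_nf
      calc ∑ f ∈ S, (Real.exp (l * D f))^2 = ∑ f ∈ S, Real.exp (2 * l * D f) := by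
            exact Finset.sum_congr rfl (fun f _ => heq f)
        _ ≤ B := by
            rw [hB]
            apply Finset.sum_le_sum_of_subset_of_nonneg (Finset.filter_subset _ _)
            intro f _ _; exact (Real.exp_pos _).le
    calc (∑ f ∈ S, Real.exp (l * D f))^2 ≤ (∑ _f ∈ S, (1:ℝ)) * ∑ f ∈ S, (Real.exp (l * D f))^2 := h1
      _ = (S.card : ℝ) * ∑ f ∈ S, (Real.exp (l * D f))^2 := by simp
      _ ≤ (S.card : ℝ) * B := by
          apply mul_le_mul_of_nonneg_left h2 (by positivity)
  -- combine: S.card * B ≥ A^2/4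
  have hsum_nonneg : 0 ≤ ∑ f ∈ S, Real.exp (l * D f) :=
    Finset.sum_nonneg (fun f _ => (Real.exp_pos _).le)
  have hA_half : A / 2 ≤ ∑ f ∈ S, Real.exp (l * D f) := by
    have h2exp : 2 * (6^n * Real.exp 30) ≤ 6^n * Real.exp 31 := by
      have h1 : (2:ℝ) ≤ Real.exp 1 := by
        have := Real.add_one_le_exp (1:ℝ); linarith
      have : Real.exp 31 = Real.exp 30 * Real.exp 1 := by
        rw [← Real.exp_add]; norm_num
      have h6 : (0:ℝ) < 6^n := by positivity
      have hX := mul_le_mul_of_nonneg_left h1 (le_of_lt (mul_pos h6 (Real.exp_pos (30:ℝ))))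
      calc 2 * (6^n * Real.exp 30) = 6^n * Real.exp 30 * 2 := by ring
        _ ≤ 6^n * Real.exp 30 * Real.exp 1 := hX
        _ = 6^n * Real.exp 31 := by rw [mul_assoc, ← Real.exp_add]; norm_num
    linarith
  have hkey : A^2 / 4 ≤ (S.card : ℝ) * B := by
    have h1 : (A/2)^2 ≤ (∑ f ∈ S, Real.exp (l * D f))^2 := by
      apply pow_le_pow_left₀ (by positivity) hA_half
    calc A^2/4 = (A/2)^2 := by ring
      _ ≤ (∑ f ∈ S, Real.exp (l * D f))^2 := h1
      _ ≤ (S.card : ℝ) * B := hCS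
  -- final
  have hfinal : Real.exp (-243) * 6^n ≤ (S.card : ℝ) := by
    have h4 : (4:ℝ) ≤ Real.exp (9/4) := by
      have h1 : (17:ℝ)/8 ≤ Real.exp (9/8) := by
        have := Real.add_one_le_exp ((9:ℝ)/8); linarith
      have : Real.exp (9/4) = Real.exp (9/8) * Real.exp (9/8) := by
        rw [← Real.exp_add]; norm_num
      nlinarith [Real.exp_pos ((9:ℝ)/8)]
    -- S.card ≥ A^2/(4B) ≥ exp(-243) 6^n
    have hA0 : 0 < A := lt_of_lt_of_le (by positivity) hA_lb
    have h6n : (0:ℝ) < 6^n := by positivity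
    rw [← mul_le_mul_iff_of_pos_right hB0]  -- multiply both sides by B
    calc Real.exp (-243) * 6^n * B ≤ Real.exp (-243) * (A^2 * Real.exp (963/4)) := by
          rw [mul_assoc]
          apply mul_le_mul_of_nonneg_left hB_ub (Real.exp_pos _).le
      _ ≤ A^2/4 := by
          have he : Real.exp (-243) * Real.exp (963/4) = Real.exp (-(9/4)) := by
            rw [← Real.exp_add]; norm_num
          have hle : Real.exp (-(9/4)) ≤ 1/4 := by
            rw [Real.exp_neg, inv_le_comm₀ (Real.exp_pos _) (by norm_num)]
            norm_num
            linarith [h4]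
          calc Real.exp (-243) * (A^2 * Real.exp (963/4))
              = A^2 * (Real.exp (-243) * Real.exp (963/4)) := by ring
            _ = A^2 * Real.exp (-(9/4)) := by rw [he]
            _ ≤ A^2 * (1/4) := by nlinarith [sq_nonneg A]
            _ = A^2/4 := by ring
      _ ≤ (S.card : ℝ) * B := hkey
  have hSeq : Finset.univ.filter (fun f : Fin n → Fin 6 =>
      2 * Real.sqrt (n : ℝ) < ((Finset.univ.filter (fun i => f i = 0)).card : ℝ)
          - ((Finset.univ.filter (fun i => f i = 1)).card : ℝ)) = S := by
    rw [hS]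
    apply Finset.filter_congr
    intro f _
    show _ ↔ 2 * s < D f
    rw [hDval f]
  rw [hSeq]
  exact hfinal


theorem stmt_15 {Ω : Type*} [MeasurableSpace Ω] (P : Measure Ω) [IsProbabilityMeasure P]
    (n : ℕ) (hn : 324 ≤ n) (Y : Fin n → Ω → Fin 6)
    (hmeas : ∀ i, Measurable (Y i))
    (hindep : iIndepFun Y P)
    (hunif : ∀ i, ∀ a : Fin 6, P {ω | Y i ω = a} = 1/6) :
    ENNReal.ofReal (Real.exp (-243)) ≤
      P {ω | 2 * Real.sqrt n <
        ((Finset.univ.filter (fun i => Y i ω = 0)).card : ℝ)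
          - ((Finset.univ.filter (fun i => Y i ω = 1)).card : ℝ)} := by
  classical
  set S : Finset (Fin n → Fin 6) := Finset.univ.filter (fun f : Fin n → Fin 6 =>
      2 * Real.sqrt n < ((Finset.univ.filter (fun i => f i = 0)).card : ℝ)
        - ((Finset.univ.filter (fun i => f i = 1)).card : ℝ)) with hS
  set C : (Fin n → Fin 6) → Set Ω := fun f => ⋂ i, Y i ⁻¹' {f i} with hC
  have hmemC : ∀ f (ω : Ω), ω ∈ C f ↔ (fun i => Y i ω) = f := by
    intro f ω
    simp only [hC, Set.mem_iInter, Set.mem_preimage, Set.mem_singleton_iff, funext_iff]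
  have hEvent : {ω | 2 * Real.sqrt n <
        ((Finset.univ.filter (fun i => Y i ω = 0)).card : ℝ)
          - ((Finset.univ.filter (fun i => Y i ω = 1)).card : ℝ)}
      = ⋃ f ∈ S, C f := by
    ext ω
    simp only [Set.mem_setOf_eq, Set.mem_iUnion, exists_prop]
    constructor
    · intro h
      refine ⟨fun i => Y i ω, ?_, (hmemC _ ω).2 rfl⟩
      rw [hS, Finset.mem_filter]
      exact ⟨Finset.mem_univ _, h⟩
    · rintro ⟨f, hf, hωf⟩
      have heq : (fun i => Y i ω) = f := (hmemC f ω).1 hωf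
      rw [hS, Finset.mem_filter] at hf
      have h2 := hf.2
      rw [← heq] at h2
      exact h2
  have hCmeas : ∀ f, MeasurableSet (C f) := by
    intro f
    exact MeasurableSet.iInter (fun i => hmeas i (measurableSet_singleton _))
  have hPC : ∀ f, P (C f) = (1/6 : ENNReal)^n := by
    intro f
    rw [hC]
    rw [hindep.meas_iInter (fun i => ⟨{f i}, measurableSet_singleton _, rfl⟩)]
    have : ∀ i, P (Y i ⁻¹' {f i}) = 1/6 := by
      intro i
      have := hunif i (f i)
      convert this using 2
      rfl
    rw [Finset.prod_congr rfl (fun i _ => this i)]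
    simp
  have hdisj : (S : Set (Fin n → Fin 6)).PairwiseDisjoint C := by
    intro f _ g _ hfg
    apply Set.disjoint_left.2
    intro ω hωf hωg
    exact hfg (((hmemC f ω).1 hωf).symm.trans ((hmemC g ω).1 hωg))
  have hPE : P (⋃ f ∈ S, C f) = S.card * (1/6 : ENNReal)^n := by
    rw [measure_biUnion_finset hdisj (fun f _ => hCmeas f)]
    rw [Finset.sum_congr rfl (fun f _ => hPC f)]
    rw [Finset.sum_const, nsmul_eq_mul]
  rw [hEvent, hPE]
  -- now the numeric comparison
  have hcount := count_main n hn
  have hSS : ((Finset.univ.filter (fun f : Fin n → Fin 6 =>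
        2 * Real.sqrt n < ((Finset.univ.filter (fun i => f i = 0)).card : ℝ)
          - ((Finset.univ.filter (fun i => f i = 1)).card : ℝ))).card : ℝ) = (S.card : ℝ) := by
    rw [hS]
  rw [hSS] at hcount
  have h6pos : (0:ℝ) < 6^n := by positivity
  have hreal : Real.exp (-243) ≤ (S.card : ℝ) * (1/6 : ℝ)^n := by
    rw [div_pow, one_pow, mul_one_div, le_div_iff₀ h6pos]
    exact hcount
  have henn : (S.card : ENNReal) * (1/6 : ENNReal)^n
      = ENNReal.ofReal ((S.card : ℝ) * (1/6 : ℝ)^n) := by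
    rw [ENNReal.ofReal_mul (by positivity)]
    congr 1
    · exact (ENNReal.ofReal_natCast _).symm
    · rw [ENNReal.ofReal_pow (by norm_num)]
      congr 1
      rw [ENNReal.ofReal_div_of_pos (by norm_num)]
      norm_num
  rw [henn]
  exact ENNReal.ofReal_le_ofReal hreal
end
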